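/- Let $A$ be an abelian group, $G,H,K$ groups, $U \le G\times H$, $V \le H \times K$, $\phi : U \to A$, $\psi : V \to A$ homomorphisms with $r(U,\phi) = l(V,\psi)$, i.e. $p_2(U) = p_1(V)$, $k_2(U) = k_1(V)$, and $\phi_2 = \psi_1$. Then $l(U*V, \phi*\psi) = l(U,\phi)$ and $r(U*V,\phi*\psi) = r(V,\psi)$, i.e. $p_1(U*V) = p_1(U)$, $k_1(U*V) = k_1(U)$, $(\phi*\psi)_1 = \phi_1$, and symmetrically on the right. -/

import Mathlib

def k1 {G H : Type*} [Group G] [Group H] (U : Subgroup (G × H)) : Subgroup G :=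
  U.comap (MonoidHom.inl G H)

def k2 {G H : Type*} [Group G] [Group H] (U : Subgroup (G × H)) : Subgroup H :=
  U.comap (MonoidHom.inr G H)

def p1 {G H : Type*} [Group G] [Group H] (U : Subgroup (G × H)) : Subgroup G :=
  U.map (MonoidHom.fst G H)

def p2 {G H : Type*} [Group G] [Group H] (U : Subgroup (G × H)) : Subgroup H :=
  U.map (MonoidHom.snd G H)

def starSub {G H K : Type*} [Group G] [Group H] [Group K]
    (U : Subgroup (G × H)) (V : Subgroup (H × K)) : Subgroup (G × K) where
  carrier := {x | ∃ h : H, (x.1, h) ∈ U ∧ (h, x.2) ∈ V}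
  one_mem' := ⟨1, U.one_mem, V.one_mem⟩
  mul_mem' := by
    rintro x y ⟨h, hx1, hx2⟩ ⟨h', hy1, hy2⟩
    exact ⟨h * h', U.mul_mem hx1 hy1, V.mul_mem hx2 hy2⟩
  inv_mem' := by
    rintro x ⟨h, hx1, hx2⟩
    exact ⟨h⁻¹, U.inv_mem hx1, V.inv_mem hx2⟩

/-- Proposition 1.6(d): if `r(U,φ) = l(V,ψ)`, i.e. `p2 U = p1 V`, `k2 U = k1 V` and
`φ₂ = ψ₁`, then `l(U*V, φ*ψ) = l(U,φ)` and `r(U*V, φ*ψ) = r(V,ψ)`. -/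
theorem star_invariants {G H K A : Type*} [Group G] [Group H] [Group K] [CommGroup A]
    (U : Subgroup (G × H)) (V : Subgroup (H × K)) (φ : U →* A) (ψ : V →* A)
    (hp : p2 U = p1 V) (hk : k2 U = k1 V)
    (hφψ : ∀ (h : H) (hU : ((1 : G), h) ∈ U) (hV : (h, (1 : K)) ∈ V),
      (φ ⟨((1 : G), h), hU⟩)⁻¹ = ψ ⟨(h, (1 : K)), hV⟩) :
    p1 (starSub U V) = p1 U ∧ k1 (starSub U V) = k1 U ∧
    p2 (starSub U V) = p2 V ∧ k2 (starSub U V) = k2 V ∧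
    ∀ χ : starSub U V →* A,
      (∀ (g : G) (k : K) (h : H) (hU : (g, h) ∈ U) (hV : (h, k) ∈ V)
        (hm : (g, k) ∈ starSub U V),
        χ ⟨(g, k), hm⟩ = φ ⟨(g, h), hU⟩ * ψ ⟨(h, k), hV⟩) →
      ((∀ (g : G) (hgU : (g, (1 : H)) ∈ U) (hgm : (g, (1 : K)) ∈ starSub U V),
          χ ⟨(g, 1), hgm⟩ = φ ⟨(g, 1), hgU⟩) ∧
       (∀ (k : K) (hkV : ((1 : H), k) ∈ V) (hkm : ((1 : G), k) ∈ starSub U V),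
          χ ⟨(1, k), hkm⟩ = ψ ⟨(1, k), hkV⟩)) := by
  have hp' : ∀ h : H, (∃ x ∈ U, x.2 = h) ↔ (∃ y ∈ V, y.1 = h) := by
    intro h
    constructor
    · rintro ⟨x, hx, rfl⟩
      have : x.2 ∈ p1 V := hp ▸ ⟨x, hx, rfl⟩
      exact this
    · rintro ⟨y, hy, rfl⟩
      have : y.1 ∈ p2 U := hp ▸ (⟨y, hy, rfl⟩ : y.1 ∈ p1 V)
      exact this
  refine ⟨?_, ?_, ?_, ?_, ?_⟩
  · apply le_antisymm
    · rintro g ⟨⟨g', k⟩, ⟨h, hU, hV⟩, rfl⟩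
      exact ⟨(g', h), hU, rfl⟩
    · rintro g ⟨⟨g', h⟩, hU, rfl⟩
      obtain ⟨⟨h', k⟩, hy, hy1⟩ := (hp' h).1 ⟨(g', h), hU, rfl⟩
      simp only at hy1
      subst hy1
      exact ⟨(g', k), ⟨h', hU, hy⟩, rfl⟩
  · apply le_antisymm
    · rintro g ⟨h, hU, hV⟩
      have hh : h ∈ k1 V := hV
      have hh' : h ∈ k2 U := by rw [hk]; exact hh
      have := U.mul_mem hU (U.inv_mem hh')
      exact (by simpa using this : (g, (1 : H)) ∈ U)
    · intro g hg
      exact ⟨1, hg, V.one_mem⟩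
  · apply le_antisymm
    · rintro k ⟨⟨g, k'⟩, ⟨h, hU, hV⟩, rfl⟩
      exact ⟨(h, k'), hV, rfl⟩
    · rintro k ⟨⟨h, k'⟩, hV, rfl⟩
      obtain ⟨⟨g, h'⟩, hx, hx2⟩ := (hp' h).2 ⟨(h, k'), hV, rfl⟩
      simp only at hx2
      subst hx2
      exact ⟨(g, k'), ⟨h', hx, hV⟩, rfl⟩
  · apply le_antisymm
    · rintro k ⟨h, hU, hV⟩
      have hh : h ∈ k2 U := hU
      have hh' : h ∈ k1 V := by rw [← hk]; exact hh
      have := V.mul_mem (V.inv_mem hh') hV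
      exact (by simpa using this : ((1 : H), k) ∈ V)
    · intro k hk'
      exact ⟨1, U.one_mem, hk'⟩
  · intro χ hχ
    constructor
    · intro g hgU hgm
      have := hχ g 1 1 hgU V.one_mem hgm
      have hψ1 : ψ ⟨((1 : H), (1 : K)), V.one_mem⟩ = 1 := by
        have : (⟨((1 : H), (1 : K)), V.one_mem⟩ : V) = 1 := rfl
        rw [this, map_one]
      rw [this, hψ1, mul_one]
    · intro k hkV hkm
      have := hχ 1 k 1 U.one_mem hkV hkm
      have hφ1 : φ ⟨((1 : G), (1 : H)), U.one_mem⟩ = 1 := by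
        have : (⟨((1 : G), (1 : H)), U.one_mem⟩ : U) = 1 := rfl
        rw [this, map_one]
      rw [this, hφ1, one_mul]
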